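/- Every strong ladder r-partition is a ladder r-partition. -/

import Mathlib

open Finset

/-- An `r`-multipartition: a tuple of finitely supported weakly decreasing
sequences of naturals (rows are 0-based). -/
structure MultiPartition (r : ℕ) where
  part : Fin r → ℕ →₀ ℕ
  mono : ∀ s i, part s (i + 1) ≤ part s i

namespace MultiPartition

variable {r e : ℕ}

/-- total number of nodes -/
def size (l : MultiPartition r) : ℕ := ∑ s, (l.part s).sum fun _ v => v

/-- a position: (component, row), both 0-based -/
abbrev Pos (r : ℕ) := Fin r × ℕ

/-- `Below p q` : the position `p` is strictly below `q`
(larger component index, or equal component and larger row). -/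
def Below (p q : Pos r) : Prop := q.1 < p.1 ∨ (p.1 = q.1 ∧ q.2 < p.2)

/-- row `p.2` of component `p.1` carries a removable node -/
def Removable (l : MultiPartition r) (p : Pos r) : Prop :=
  l.part p.1 (p.2 + 1) < l.part p.1 p.2

/-- row `p.2` of component `p.1` carries an addable node -/
def Addable (l : MultiPartition r) (p : Pos r) : Prop :=
  p.2 = 0 ∨ l.part p.1 p.2 < l.part p.1 (p.2 - 1)

/-- residue of the node in row `i`, column `j` (0-based) of component `s`:
`j - i + v s` in `ZMod e` (for `e = 0` this is `ℤ`). -/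
def resNode (v : Fin r → ZMod e) (s : Fin r) (i j : ℕ) : ZMod e :=
  (j : ZMod e) - (i : ZMod e) + v s

/-- residue of the removable node in row `p` -/
def resRem (v : Fin r → ZMod e) (l : MultiPartition r) (p : Pos r) : ZMod e :=
  resNode v p.1 p.2 (l.part p.1 p.2 - 1)

/-- residue of the addable node in row `p` -/
def resAdd (v : Fin r → ZMod e) (l : MultiPartition r) (p : Pos r) : ZMod e :=
  resNode v p.1 p.2 (l.part p.1 p.2)

/-- `p` is a normal `x`-node of `l`: it is a removable `x`-node, and for every
addable `x`-node `q` below it, there are strictly more removable `x`-nodes than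
addable `x`-nodes strictly between `q` and `p`. -/
def Normal (v : Fin r → ZMod e) (l : MultiPartition r) (p : Pos r) (x : ZMod e) : Prop :=
  Removable l p ∧ resRem v l p = x ∧
  ∀ q : Pos r, Addable l q → resAdd v l q = x → Below q p →
    {q' : Pos r | Removable l q' ∧ resRem v l q' = x ∧ Below q' p ∧ Below q q'}.ncard >
    {q' : Pos r | Addable l q' ∧ resAdd v l q' = x ∧ Below q' p ∧ Below q q'}.ncard

/-- the good `x`-node: the highest normal `x`-node -/
def Good (v : Fin r → ZMod e) (l : MultiPartition r) (p : Pos r) (x : ZMod e) : Prop :=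
  Normal v l p x ∧ ∀ q, Normal v l q x → ¬ Below p q

/-- `m` is obtained from `l` by adding one node at the end of row `p.2` of
component `p.1`. -/
def AddNode (l m : MultiPartition r) (p : Pos r) : Prop :=
  (∀ s, s ≠ p.1 → m.part s = l.part s) ∧
  (∀ i, i ≠ p.2 → m.part p.1 i = l.part p.1 i) ∧
  m.part p.1 p.2 = l.part p.1 p.2 + 1

/-- the empty multipartition -/
def IsEmptyMP (l : MultiPartition r) : Prop := ∀ s, l.part s = 0

/-- Kleshchev multipartitions with respect to `(e; v)`: defined recursively by
adding good nodes. -/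
inductive Kleshchev (v : Fin r → ZMod e) : MultiPartition r → Prop
  | empty (l : MultiPartition r) : IsEmptyMP l → Kleshchev v l
  | step (l m : MultiPartition r) (p : Pos r) (x : ZMod e) :
      Kleshchev v l → AddNode l m p → Good v m p x → Kleshchev v m

/-- a semi-ladder node: a removable node with no lower addable node of the
same residue -/
def SemiLadder (v : Fin r → ZMod e) (l : MultiPartition r) (p : Pos r) : Prop :=
  Removable l p ∧ ∀ q, Addable l q → resAdd v l q = resRem v l p → ¬ Below q p

/-- a ladder node: a semi-ladder node with no higher semi-ladder node of the
same residue -/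
def LadderNode (v : Fin r → ZMod e) (l : MultiPartition r) (p : Pos r) : Prop :=
  SemiLadder v l p ∧
  ∀ q, SemiLadder v l q → resRem v l q = resRem v l p → ¬ Below p q

/-- `m` is obtained from `l` by removing all the nodes of the ladder
`x`-sequence of `l` (i.e. all semi-ladder `x`-nodes of `l`, which is required
to be nonempty). -/
def RemoveLadderSeq (v : Fin r → ZMod e) (l m : MultiPartition r) (x : ZMod e) : Prop :=
  (∃ p, SemiLadder v l p ∧ resRem v l p = x) ∧
  ∀ s i, (SemiLadder v l (s, i) ∧ resRem v l (s, i) = x →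
            m.part s i = l.part s i - 1) ∧
         (¬ (SemiLadder v l (s, i) ∧ resRem v l (s, i) = x) →
            m.part s i = l.part s i)

/-- strong ladder multipartitions: obtained from the empty multipartition by
successively adding whole ladder sequences -/
inductive StrongLadder (v : Fin r → ZMod e) : MultiPartition r → Prop
  | empty (l : MultiPartition r) : IsEmptyMP l → StrongLadder v l
  | step (l m : MultiPartition r) (x : ZMod e) :
      StrongLadder v l → RemoveLadderSeq v m l x → StrongLadder v m

/-- ladder multipartitions: obtained from the empty multipartition by
successively adding single ladder nodes -/
inductive Ladder (v : Fin r → ZMod e) : MultiPartition r → Prop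
  | empty (l : MultiPartition r) : IsEmptyMP l → Ladder v l
  | step (l m : MultiPartition r) (p : Pos r) :
      Ladder v l → AddNode l m p → LadderNode v m p → Ladder v m

/-- the dominance order on multipartitions -/
def Dominates (l m : MultiPartition r) : Prop :=
  ∀ s : Fin r, ∀ i : ℕ,
    ((∑ a ∈ Finset.univ.filter (fun a => a < s), (l.part a).sum fun _ v => v) +
      ∑ j ∈ Finset.range i, l.part s j) ≥
    ((∑ a ∈ Finset.univ.filter (fun a => a < s), (m.part a).sum fun _ v => v) +
      ∑ j ∈ Finset.range i, m.part s j)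

/-- the order `≺` of Definition 3.6 -/
def Prec (l m : MultiPartition r) : Prop :=
  ∃ s : Fin r, ∃ t : ℕ,
    (∀ j, s < j → l.part j = m.part j) ∧
    (∀ j, t < j → l.part s j = m.part s j) ∧
    l.part s t < m.part s t

/-- hook length at the node in row `i`, column `j` (0-based) of a partition `f` -/
noncomputable def hookLen (f : ℕ →₀ ℕ) (i j : ℕ) : ℕ :=
  (f i - j) + {k : ℕ | i < k ∧ j < f k}.ncard

/-- an `e`-core: a partition having no hook of length `e`
(for `e = 0` every partition is a `0`-core) -/
def ECore (e : ℕ) (f : ℕ →₀ ℕ) : Prop :=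
  ∀ i j, j < f i → hookLen f i j ≠ e

/-- `e`-restricted partitions (every partition is `0`-restricted) -/
def ERestricted (e : ℕ) (f : ℕ →₀ ℕ) : Prop :=
  ∀ i, e ≠ 0 → f i - f (i + 1) < e

end MultiPartition

namespace MultiPartition

variable {r e : ℕ}

attribute [local instance] Classical.propDecidable

theorem mp_ext' {l m : MultiPartition r} (h : ∀ s i, l.part s i = m.part s i) : l = m := by
  cases l with | mk lp lm =>
  cases m with | mk mp mm =>
  simp only [mk.injEq]
  funext s
  exact Finsupp.ext fun i => h s i

def key (p : Pos r) : ℕ ×ₗ ℕ := toLex (p.1.val, p.2)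

theorem key_lt_iff {s t : Fin r} {i j : ℕ} :
    key (s, i) < key (t, j) ↔ (s : ℕ) < t ∨ ((s : ℕ) = (t : ℕ) ∧ i < j) :=
  Prod.Lex.lt_iff

theorem key_le_iff {s t : Fin r} {i j : ℕ} :
    key (s, i) ≤ key (t, j) ↔ (s : ℕ) < t ∨ ((s : ℕ) = (t : ℕ) ∧ i ≤ j) :=
  Prod.Lex.le_iff

theorem key_inj {p q : Pos r} (h : key p = key q) : p = q := by
  have h' : (p.1.val, p.2) = (q.1.val, q.2) := h
  obtain ⟨h1, h2⟩ := Prod.mk.injEq .. ▸ h'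
  exact Prod.ext (Fin.ext h1) h2

theorem below_iff' {p q : Pos r} : Below p q ↔ key q < key p := by
  rw [show key q = key (q.1, q.2) from rfl, show key p = key (p.1, p.2) from rfl, key_lt_iff]
  unfold Below
  rw [Fin.lt_def]
  constructor
  · rintro (h | ⟨h1, h2⟩)
    · exact Or.inl h
    · exact Or.inr ⟨by rw [h1], h2⟩
  · rintro (h | ⟨h1, h2⟩)
    · exact Or.inl h
    · exact Or.inr ⟨Fin.ext h1.symm, h2⟩

noncomputable def remove (m : MultiPartition r) (R : Set (Pos r))
    (hR : ∀ p ∈ R, Removable m p) : MultiPartition r where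
  part s := Finsupp.onFinset (m.part s).support
    (fun i => m.part s i - if (s, i) ∈ R then 1 else 0)
    (fun i hi => by
      rw [Finsupp.mem_support_iff]
      intro h0
      apply hi
      simp [h0])
  mono s i := by
    simp only [Finsupp.onFinset_apply]
    by_cases h1 : (s, i) ∈ R
    · have h3 : m.part s (i + 1) < m.part s i := hR _ h1
      split_ifs <;> omega
    · have h2 := m.mono s i
      split_ifs <;> omega

theorem remove_apply (m : MultiPartition r) (R : Set (Pos r))
    (hR : ∀ p ∈ R, Removable m p) (s : Fin r) (i : ℕ) :
    (remove m R hR).part s i = m.part s i - if (s, i) ∈ R then 1 else 0 := rfl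

theorem ladder_of_remove (h1 : (1 : ZMod e) ≠ 0) (v : Fin r → ZMod e)
    (m : MultiPartition r) (x : ZMod e) :
    ∀ (n : ℕ) (R : Set (Pos r)) (hfin : R.Finite)
      (hsub : ∀ p ∈ R, SemiLadder v m p ∧ resRem v m p = x)
      (hup : ∀ p ∈ R, ∀ q, SemiLadder v m q → resRem v m q = x → Below p q → q ∈ R),
      hfin.toFinset.card = n →
      Ladder v (remove m R (fun p hp => (hsub p hp).1.1)) → Ladder v m := by
  intro n
  induction n with
  | zero =>
    intro R hfin hsub hup hcard hlad
    obtain rfl : R = ∅ := Set.Finite.toFinset_eq_empty.mp (Finset.card_eq_zero.mp hcard)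
    have heq : remove m ∅ (fun p hp => (hsub p hp).1.1) = m :=
      mp_ext' fun s i => by rw [remove_apply, if_neg (Set.notMem_empty _), Nat.sub_zero]
    rwa [heq] at hlad
  | succ n ih =>
    intro R hfin hsub hup hcard hlad
    have hne : hfin.toFinset.Nonempty := Finset.card_pos.mp (by omega)
    obtain ⟨p, hpF, hmax'⟩ := Finset.exists_max_image hfin.toFinset key hne
    have hpR : p ∈ R := hfin.mem_toFinset.mp hpF
    have hmax : ∀ q ∈ R, q ≠ p → key q < key p := by
      intro q hq hqp
      rcases lt_or_eq_of_le (hmax' q (hfin.mem_toFinset.mpr hq)) with h | h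
      · exact h
      · exact absurd (key_inj h) hqp
    have hrmp : Removable m p := (hsub p hpR).1.1
    have hrp : resRem v m p = x := (hsub p hpR).2
    have hp_pos : 1 ≤ m.part p.1 p.2 := by
      have := hrmp; unfold Removable at this; omega
    set R' : Set (Pos r) := R \ {p} with hR'def
    have hmemR' : ∀ u : Pos r, u ∈ R' ↔ u ∈ R ∧ u ≠ p := by
      intro u; rw [hR'def]; simp [Set.mem_diff]
    have hsub' : ∀ q ∈ R', SemiLadder v m q ∧ resRem v m q = x := fun q hq => hsub q hq.1
    have hrem' : ∀ q ∈ R', Removable m q := fun q hq => (hsub' q hq).1.1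
    have hkeyR' : ∀ q ∈ R', key q < key p :=
      fun q hq => hmax q ((hmemR' q).mp hq).1 ((hmemR' q).mp hq).2
    have hnot : ∀ u : Pos r, key p ≤ key u → u ∉ R' := fun u h hu =>
      absurd h (not_le.mpr (hkeyR' u hu))
    have hpn : p ∉ R' := fun h => lt_irrefl _ (hkeyR' p h)
    have hpn2 : ((p.1, p.2) : Pos r) ∉ R' := hpn
    have hp2n : ((p.1, p.2 + 1) : Pos r) ∉ R' :=
      hnot _ (le_of_lt (key_lt_iff.mpr (Or.inr ⟨rfl, Nat.lt_succ_self _⟩)))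
    -- value facts
    have hvalp : (remove m R' hrem').part p.1 p.2 = m.part p.1 p.2 := by
      rw [remove_apply, if_neg hpn2, Nat.sub_zero]
    have hrmp' : Removable (remove m R' hrem') p := by
      show (remove m R' hrem').part p.1 (p.2 + 1) < (remove m R' hrem').part p.1 p.2
      rw [remove_apply, remove_apply, if_neg hpn2, if_neg hp2n]
      unfold Removable at hrmp
      omega
    have hresp : resRem v (remove m R' hrem') p = x := by
      unfold resRem
      rw [hvalp]
      exact hrp
    -- key fact: positions not in R' keep addability data below any position above them
    -- SemiLadder of p in remove m R'
    have hslp : SemiLadder v (remove m R' hrem') p := by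
      refine ⟨hrmp', ?_⟩
      intro q hq hres hbel
      have hkq : key p < key q := below_iff'.mp hbel
      have hq1 : ((q.1, q.2) : Pos r) ∉ R' := hnot q (le_of_lt hkq)
      have hq2 : q.2 = 0 ∨ ((q.1, q.2 - 1) : Pos r) ∉ R' := by
        by_cases h0 : q.2 = 0
        · exact Or.inl h0
        · refine Or.inr (hnot _ ?_)
          rcases key_lt_iff.mp hkq with h | ⟨h, h2⟩
          · exact key_le_iff.mpr (Or.inl h)
          · exact key_le_iff.mpr (Or.inr ⟨h, by omega⟩)
      have haddm : Addable m q := by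
        rcases hq2 with h0 | hq2
        · exact Or.inl h0
        · rcases hq with h0 | hlt
          · exact Or.inl h0
          · right
            rwa [remove_apply, remove_apply, if_neg hq1, if_neg hq2,
              Nat.sub_zero, Nat.sub_zero] at hlt
      have hresm : resAdd v m q = x := by
        have hv : (remove m R' hrem').part q.1 q.2 = m.part q.1 q.2 := by
          rw [remove_apply, if_neg hq1, Nat.sub_zero]
        have : resAdd v m q = resAdd v (remove m R' hrem') q := by
          unfold resAdd; rw [hv]
        rw [this, hres, hresp]
      exact (hsub p hpR).1.2 q haddm (by rw [hrp]; exact hresm) hbel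
    -- LadderNode of p in remove m R'
    have hlnp : LadderNode v (remove m R' hrem') p := by
      refine ⟨hslp, ?_⟩
      intro q hq hres habove
      have hkq : key q < key p := below_iff'.mp habove
      by_cases hex : ∃ u ∈ R', key q ≤ key u
      · obtain ⟨u, huR', hle⟩ := hex
        rcases lt_or_eq_of_le hle with hlt | heq
        · -- u is strictly below q : u is an addable x-node of remove m R' below q
          have huR'2 : ((u.1, u.2) : Pos r) ∈ R' := huR'
          have hrmu : Removable m u := hrem' u huR'
          have hupos : 1 ≤ m.part u.1 u.2 := by
            unfold Removable at hrmu; omega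
          have ha : Addable (remove m R' hrem') u := by
            rcases Nat.eq_zero_or_pos u.2 with h0 | hpos
            · exact Or.inl h0
            · right
              rw [remove_apply, remove_apply, if_pos huR'2]
              by_cases hc : ((u.1, u.2 - 1) : Pos r) ∈ R'
              · rw [if_pos hc]
                have hrm2 : Removable m (u.1, u.2 - 1) := hrem' _ hc
                unfold Removable at hrm2
                simp only at hrm2
                have he2 : u.2 - 1 + 1 = u.2 := by omega
                rw [he2] at hrm2
                omega
              · rw [if_neg hc]
                have hm2 := m.mono u.1 (u.2 - 1)
                have he2 : u.2 - 1 + 1 = u.2 := by omega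
                rw [he2] at hm2
                omega
          have hra : resAdd v (remove m R' hrem') u = resRem v (remove m R' hrem') q := by
            have : (remove m R' hrem').part u.1 u.2 = m.part u.1 u.2 - 1 := by
              rw [remove_apply, if_pos huR'2]
            unfold resAdd
            rw [this]
            have : resNode v u.1 u.2 (m.part u.1 u.2 - 1) = x := (hsub' u huR').2
            rw [this, hres, hresp]
          exact absurd (below_iff'.mpr hlt) (hq.2 u ha hra)
        · -- u = q : q is in R', its removable node has residue x - 1 ≠ x
          obtain rfl : q = u := key_inj heq
          have hqR'2 : ((q.1, q.2) : Pos r) ∈ R' := huR'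
          have hM'q : (remove m R' hrem').part q.1 q.2 = m.part q.1 q.2 - 1 := by
            rw [remove_apply, if_pos hqR'2]
          have hrmq' : Removable (remove m R' hrem') q := hq.1
          have ha2 : 2 ≤ m.part q.1 q.2 := by
            unfold Removable at hrmq'
            rw [hM'q] at hrmq'
            omega
          have e1 : resRem v (remove m R' hrem') q = x - 1 := by
            unfold resRem
            rw [hM'q]
            have hx : resNode v q.1 q.2 (m.part q.1 q.2 - 1) = x := (hsub' q huR').2
            unfold resNode at hx ⊢
            have hc : ((m.part q.1 q.2 - 1 - 1 : ℕ) : ZMod e) =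
                ((m.part q.1 q.2 - 1 : ℕ) : ZMod e) - 1 := by
              rw [show m.part q.1 q.2 - 1 - 1 = (m.part q.1 q.2 - 1) - 1 from rfl,
                Nat.cast_sub (by omega : 1 ≤ m.part q.1 q.2 - 1), Nat.cast_one]
            rw [hc, ← hx]
            ring
          rw [hres, hresp] at e1
          exact h1 (by linear_combination e1)
      · -- q is below all of R' : q is a semi-ladder x-node of m, contradiction with maximality
        push_neg at hex
        have hall : ∀ u ∈ R', key u < key q := hex
        have hq1 : ((q.1, q.2) : Pos r) ∉ R' := fun h => lt_irrefl _ (hall _ h)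
        have hq2 : ((q.1, q.2 + 1) : Pos r) ∉ R' := fun h =>
          absurd (hall _ h) (not_lt.mpr (le_of_lt (key_lt_iff.mpr (Or.inr ⟨rfl, Nat.lt_succ_self _⟩))))
        have hrmq : Removable m q := by
          have := hq.1
          unfold Removable at this ⊢
          rwa [remove_apply, remove_apply, if_neg hq1, if_neg hq2,
            Nat.sub_zero, Nat.sub_zero] at this
        have hvq : (remove m R' hrem').part q.1 q.2 = m.part q.1 q.2 := by
          rw [remove_apply, if_neg hq1, Nat.sub_zero]
        have hrq : resRem v m q = x := by
          have : resRem v m q = resRem v (remove m R' hrem') q := by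
            unfold resRem; rw [hvq]
          rw [this, hres, hresp]
        have hsm : SemiLadder v m q := by
          refine ⟨hrmq, ?_⟩
          intro u hau hru hbu
          have hkqu : key q < key u := below_iff'.mp hbu
          have hu1 : ((u.1, u.2) : Pos r) ∉ R' := fun h => lt_asymm hkqu (hall _ h)
          have hu2 : u.2 = 0 ∨ ((u.1, u.2 - 1) : Pos r) ∉ R' := by
            by_cases h0 : u.2 = 0
            · exact Or.inl h0
            · refine Or.inr (fun h => ?_)
              have hge : key q ≤ key (u.1, u.2 - 1) := by
                rcases key_lt_iff.mp hkqu with h' | ⟨h', h2⟩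
                · exact key_le_iff.mpr (Or.inl h')
                · exact key_le_iff.mpr (Or.inr ⟨h', by omega⟩)
              exact absurd (hall _ h) (not_lt.mpr hge)
          have hau' : Addable (remove m R' hrem') u := by
            rcases hu2 with h0 | hu2
            · exact Or.inl h0
            · rcases hau with h0 | hlt
              · exact Or.inl h0
              · right
                rw [remove_apply, remove_apply, if_neg hu1, if_neg hu2,
                  Nat.sub_zero, Nat.sub_zero]
                exact hlt
          have hru' : resAdd v (remove m R' hrem') u = resRem v (remove m R' hrem') q := by
            have hv : (remove m R' hrem').part u.1 u.2 = m.part u.1 u.2 := by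
              rw [remove_apply, if_neg hu1, Nat.sub_zero]
            have : resAdd v (remove m R' hrem') u = resAdd v m u := by
              unfold resAdd; rw [hv]
            rw [this, hru, hrq, hres, hresp]
          exact hq.2 u hau' hru' hbu
        have hqR : q ∈ R := hup p hpR q hsm hrq habove
        have hqp : q ≠ p := fun h => lt_irrefl _ (h ▸ hkq)
        exact absurd (hall q ((hmemR' q).mpr ⟨hqR, hqp⟩)) (lt_irrefl _)
    -- AddNode from remove m R to remove m R'
    have hR2 : ∀ u : Pos r, u ∈ R ↔ u ∈ R' ∨ u = p := by
      intro u
      rw [hmemR' u]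
      by_cases h : u = p
      · subst h; simpa using hpR
      · simp [h]
    have haddnode : AddNode (remove m R (fun q hq => (hsub q hq).1.1)) (remove m R' hrem') p := by
      refine ⟨?_, ?_, ?_⟩
      · intro s hs
        ext i
        rw [remove_apply, remove_apply]
        have : ((s, i) ∈ R) ↔ ((s, i) ∈ R') := by
          rw [hR2]
          constructor
          · rintro (h | h)
            · exact h
            · exact absurd (congrArg Prod.fst h) hs
          · exact Or.inl
        by_cases h : (s, i) ∈ R'
        · rw [if_pos h, if_pos (this.mpr h)]
        · rw [if_neg h, if_neg (fun hh => h (this.mp hh))]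
      · intro i hi
        rw [remove_apply, remove_apply]
        have : ((p.1, i) ∈ R) ↔ ((p.1, i) ∈ R') := by
          rw [hR2]
          constructor
          · rintro (h | h)
            · exact h
            · exact absurd (congrArg Prod.snd h) hi
          · exact Or.inl
        by_cases h : (p.1, i) ∈ R'
        · rw [if_pos h, if_pos (this.mpr h)]
        · rw [if_neg h, if_neg (fun hh => h (this.mp hh))]
      · rw [remove_apply, remove_apply, if_neg hpn2, if_pos (show ((p.1, p.2) : Pos r) ∈ R from hpR)]
        omega
    -- finish by induction
    have hup' : ∀ p' ∈ R', ∀ q, SemiLadder v m q → resRem v m q = x → Below p' q → q ∈ R' := by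
      intro p' hp' q hq1 hq2 hq3
      have hqR : q ∈ R := hup p' ((hmemR' p').mp hp').1 q hq1 hq2 hq3
      refine (hmemR' q).mpr ⟨hqR, ?_⟩
      rintro rfl
      exact lt_asymm (below_iff'.mp hq3) (hkeyR' p' hp')
    have hfin' : R'.Finite := hfin.subset Set.diff_subset
    have hcard' : hfin'.toFinset.card = n := by
      have : hfin'.toFinset = hfin.toFinset.erase p := by
        ext u
        simp only [Set.Finite.mem_toFinset, Finset.mem_erase, hmemR' u]
        tauto
      rw [this, Finset.card_erase_of_mem hpF, hcard]
      rfl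
    have hlad' : Ladder v (remove m R' (fun q hq => (hsub' q hq).1.1)) :=
      Ladder.step _ _ p hlad haddnode hlnp
    exact ih R' hfin' hsub' hup' hcard' hlad'

end MultiPartition



open MultiPartition

/-- every strong ladder multipartition is a ladder multipartition. -/
theorem strongladder_is_ladder {r e : ℕ} (he : e = 0 ∨ 2 ≤ e)
    (v : Fin r → ZMod e) (l : MultiPartition r)
    (h : StrongLadder v l) : Ladder v l := by
  classical
  have h1 : (1 : ZMod e) ≠ 0 := by
    rcases he with rfl | he
    · exact one_ne_zero
    · haveI : Fact (1 < e) := ⟨by omega⟩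
      exact one_ne_zero
  induction h with
  | empty l hl => exact Ladder.empty l hl
  | step l m x hsl hrm ih =>
    set S : Set (Pos r) := {p | SemiLadder v m p ∧ resRem v m p = x} with hS
    have hsub : ∀ p ∈ S, SemiLadder v m p ∧ resRem v m p = x := fun p hp => hp
    have hfin : S.Finite := by
      refine Set.Finite.subset (Finset.univ.biUnion fun s : Fin r =>
        (m.part s).support.image fun i => ((s, i) : Pos r)).finite_toSet ?_
      intro p hp
      have hrm0 : m.part p.1 (p.2 + 1) < m.part p.1 p.2 := hp.1.1
      simp only [Finset.coe_biUnion, Finset.mem_coe, Finset.mem_biUnion, Finset.mem_univ,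
        true_and, Finset.mem_image, Set.mem_iUnion]
      exact ⟨p.1, trivial, p.2, Finsupp.mem_support_iff.mpr (by omega), rfl⟩
    have heq : l = remove m S (fun p hp => hp.1.1) := by
      apply mp_ext'
      intro s i
      rw [remove_apply]
      by_cases hmem : ((s, i) : Pos r) ∈ S
      · rw [if_pos hmem]
        exact (hrm.2 s i).1 hmem
      · rw [if_neg hmem, Nat.sub_zero]
        exact (hrm.2 s i).2 hmem
    exact ladder_of_remove h1 v m x hfin.toFinset.card S hfin hsub
      (fun p hp q hq1 hq2 _ => ⟨hq1, hq2⟩) rfl (heq ▸ ih)
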